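/- arXiv:2301.04127 — 2 statements merged into one kernel-verified Lean document; each statement's English description precedes it below -/
import Mathlib

section
/- Let (S,h) be an admissible 4-polarized lattice. Then for any two distinct lines l, m ∈ root₁(S,h) one has ⟨l,m⟩ ∈ {−1, 0, 1}; if moreover no root r ∈ root₀(S,h) separates l and m (i.e., there is no r with ⟨r,r⟩ = −2, ⟨r,h⟩ = 0, ⟨r,l⟩ > 0 and ⟨r,m⟩ < 0), then ⟨l,m⟩ ∈ {0, 1}. -/
/-!
Common definitions: 4-polarized lattices, lines, roots, Fano graphs
(following Degtyarev–Rams, "Counting lines with Vinberg's algorithm").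
-/

namespace K3

variable {S : Type*} [AddCommGroup S] [Module ℤ S]

/-- `root₁(S,h)`: the *lines* of a 4-polarized lattice. -/
def root1 (B : S →ₗ[ℤ] S →ₗ[ℤ] ℤ) (h : S) : Set S :=
  {l : S | B l l = -2 ∧ B l h = 1}

/-- `root₀(S,h)`: the *roots* of a 4-polarized lattice. -/
def root0 (B : S →ₗ[ℤ] S →ₗ[ℤ] ℤ) (h : S) : Set S :=
  {r : S | B r r = -2 ∧ B r h = 0}

/-- `(S,B,h)` is a 4-polarized lattice: `S` is a finitely generated free ℤ-module, `B`
a symmetric bilinear form, `⟨h,h⟩ = 4`, and `⟨v,v⟩ < 0` for nonzero `v ⊥ h`. -/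
structure IsPolarized (B : S →ₗ[ℤ] S →ₗ[ℤ] ℤ) (h : S) : Prop where
  free : Module.Free ℤ S
  finite : Module.Finite ℤ S
  symm : ∀ u v : S, B u v = B v u
  deg : B h h = 4
  hyperbolic : ∀ v : S, v ≠ 0 → B v h = 0 → B v v < 0

/-- Admissibility: there is no `u` with `⟨u,u⟩ = 0` and `⟨u,h⟩ = 2`. -/
def IsAdmissible (B : S →ₗ[ℤ] S →ₗ[ℤ] ℤ) (h : S) : Prop :=
  ¬ ∃ u : S, B u u = 0 ∧ B u h = 2

/-- The E₈ Cartan matrix (Bourbaki numbering of the Dynkin diagram). -/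
def e8Cartan : Matrix (Fin 8) (Fin 8) ℤ :=
  !![2,0,-1,0,0,0,0,0;
     0,2,0,-1,0,0,0,0;
     -1,0,2,-1,0,0,0,0;
     0,-1,-1,2,-1,0,0,0;
     0,0,0,-1,2,-1,0,0;
     0,0,0,0,-1,2,-1,0;
     0,0,0,0,0,-1,2,-1;
     0,0,0,0,0,0,-1,2]

/-- The Gram matrix of `L := E₈ ⊕ E₈ ⊕ U ⊕ U ⊕ U`, where `E₈` is *negative* definite
(Gram matrix the negative of the E₈ Cartan matrix) and `U` has Gram matrix `[[0,1],[1,0]]`. -/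
def LGram : Matrix (Fin 22) (Fin 22) ℤ := fun i j =>
  if hi : (i : ℕ) < 8 then
    (if hj : (j : ℕ) < 8 then -e8Cartan ⟨i, hi⟩ ⟨j, hj⟩ else 0)
  else if hi' : (i : ℕ) < 16 then
    (if hj' : 8 ≤ (j : ℕ) ∧ (j : ℕ) < 16 then
      -e8Cartan ⟨(i : ℕ) - 8, by omega⟩ ⟨(j : ℕ) - 8, by omega⟩ else 0)
  else
    (if 16 ≤ (j : ℕ) ∧ (i : ℕ) / 2 = (j : ℕ) / 2 ∧ i ≠ j then 1 else 0)

/-- A geometric 4-polarized lattice: admissible, even, and admitting a primitive isometric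
embedding into `L = 2E₈ ⊕ 3U` (primitive = the quotient by the image is torsion-free). -/
structure IsGeometric (B : S →ₗ[ℤ] S →ₗ[ℤ] ℤ) (h : S) extends IsPolarized B h : Prop where
  admissible : IsAdmissible B h
  even : ∀ v : S, Even (B v v)
  embeds : ∃ f : S →ₗ[ℤ] (Fin 22 → ℤ), Function.Injective f ∧
    (∀ u v : S, B u v = ∑ i, ∑ j, f u i * LGram i j * f v j) ∧
    (∀ (x : Fin 22 → ℤ) (n : ℤ), n ≠ 0 → n • x ∈ LinearMap.range f →
      x ∈ LinearMap.range f)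

/-- A ℤ-linear functional is *Weyl-generic* if it does not vanish on any root. -/
def WeylGeneric (B : S →ₗ[ℤ] S →ₗ[ℤ] ℤ) (h : S) (φ : S →ₗ[ℤ] ℤ) : Prop :=
  ∀ r ∈ root0 B h, φ r ≠ 0

/-- The vertex set of the Fano graph `Fn_φ(S,h)`. -/
def fanoVerts (B : S →ₗ[ℤ] S →ₗ[ℤ] ℤ) (h : S) (φ : S →ₗ[ℤ] ℤ) : Set S :=
  {l ∈ root1 B h | ∀ r ∈ root0 B h, 0 < φ r → 0 ≤ B l r}

/-- The set `Γ` together with `h` spans `S ⊗ ℚ`; since `S` is free, this is equivalent to: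
every `s : S` has a nonzero integer multiple in the ℤ-span of `Γ ∪ {h}`. -/
def QSpannedByLines (Γ : Set S) (h : S) : Prop :=
  ∀ s : S, ∃ n : ℤ, n ≠ 0 ∧ n • s ∈ Submodule.span ℤ (Γ ∪ {h})

/-- The Fano graph as a simple graph on `Γ`: distinct `u, v` adjacent iff `⟨u,v⟩ = 1`. -/
def fanoGraph (B : S →ₗ[ℤ] S →ₗ[ℤ] ℤ) (Γ : Set S) : SimpleGraph Γ where
  Adj u v := u ≠ v ∧ B u.1 v.1 = 1 ∧ B v.1 u.1 = 1
  symm := ⟨by intro u v hadj; exact ⟨hadj.1.symm, hadj.2.2, hadj.2.1⟩⟩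
  loopless := ⟨by intro u hadj; exact hadj.1 rfl⟩

/-- `Γ` has no separating roots: no root is positive on one element of `Γ` and negative
on another. -/
def NoSeparatingRoots (B : S →ₗ[ℤ] S →ₗ[ℤ] ℤ) (h : S) (Γ : Set S) : Prop :=
  ¬ ∃ r ∈ root0 B h, ∃ u ∈ Γ, ∃ v ∈ Γ, 0 < B r u ∧ B r v < 0

/-- A triangle in a set `Γ` of lines: three distinct elements pairwise of product `1`. -/
def IsTriangle (B : S →ₗ[ℤ] S →ₗ[ℤ] ℤ) (Γ : Set S) (c₁ c₂ c₃ : S) : Prop :=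
  c₁ ∈ Γ ∧ c₂ ∈ Γ ∧ c₃ ∈ Γ ∧ c₁ ≠ c₂ ∧ c₁ ≠ c₃ ∧ c₂ ≠ c₃ ∧
    B c₁ c₂ = 1 ∧ B c₁ c₃ = 1 ∧ B c₂ c₃ = 1

/-- Simple sections through `a` of the triangle `(a,b,c)`:
`sec a := {l ∈ Γ : ⟨l,a⟩ = 1, ⟨l,b⟩ = ⟨l,c⟩ = 0}`. -/
def sec (B : S →ₗ[ℤ] S →ₗ[ℤ] ℤ) (Γ : Set S) (a b c : S) : Set S :=
  {l ∈ Γ | B l a = 1 ∧ B l b = 0 ∧ B l c = 0}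

/-- The pencil of a triangle `(c₁,c₂,c₃)` in `Γ`. -/
def pencil (B : S →ₗ[ℤ] S →ₗ[ℤ] ℤ) (Γ : Set S) (c₁ c₂ c₃ : S) : Set S :=
  {c₁, c₂, c₃} ∪ {l ∈ Γ | B l c₁ = 0 ∧ B l c₂ = 0 ∧ B l c₃ = 0}

end K3

namespace K3

/-- In an admissible 4-polarized lattice, two distinct lines `l, m`
satisfy `⟨l,m⟩ ∈ {−1,0,1}`; if moreover no root separates `l` and `m`, then
`⟨l,m⟩ ∈ {0,1}`. -/
theorem distinct_lines_intersection
    {S : Type*} [AddCommGroup S] [Module ℤ S]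
    (B : S →ₗ[ℤ] S →ₗ[ℤ] ℤ) (h : S)
    (hpol : IsPolarized B h) (hadm : IsAdmissible B h)
    (l m : S) (hl : l ∈ root1 B h) (hm : m ∈ root1 B h) (hlm : l ≠ m) :
    B l m ∈ ({-1, 0, 1} : Set ℤ) ∧
    ((¬ ∃ r ∈ root0 B h, 0 < B r l ∧ B r m < 0) → B l m ∈ ({0, 1} : Set ℤ)) := by
  obtain ⟨hll, hlh⟩ := hl
  obtain ⟨hmm, hmh⟩ := hm
  have hml : B m l = B l m := hpol.symm m l
  have hhl : B h l = B l h := hpol.symm h l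
  have hhm : B h m = B l h * 0 + B m h := by rw [hpol.symm h m]; ring
  set a := B l m with ha
  -- lower bound: l - m ⊥ h, nonzero
  have h1 : B (l - m) (l - m) = -4 - 2 * a := by
    simp [map_sub, LinearMap.sub_apply, hll, hmm, hml]; ring
  have h2 : B (l - m) h = 0 := by
    simp [map_sub, LinearMap.sub_apply, hlh, hmh]
  have h3 : l - m ≠ 0 := sub_ne_zero.mpr hlm
  have hlow : -4 - 2 * a < 0 := h1 ▸ hpol.hyperbolic _ h3 h2
  -- upper bound: v = 2l + 2m - h
  have h4 : B (l + l + m + m - h) (l + l + m + m - h) = 8 * a - 20 := by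
    simp [map_sub, map_add, LinearMap.sub_apply, LinearMap.add_apply,
      hll, hmm, hml, hlh, hmh, hhl, hhm, hpol.deg]; ring
  have hup : a ≤ 2 := by
    by_cases hv : l + l + m + m - h = 0
    · rw [hv] at h4; simp at h4; omega
    · have h5 : B (l + l + m + m - h) h = 0 := by
        simp [map_sub, map_add, LinearMap.sub_apply, LinearMap.add_apply,
          hlh, hmh, hpol.deg]
      have := hpol.hyperbolic _ hv h5
      omega
  -- a = 2 contradicts admissibility
  have hne2 : a ≠ 2 := by
    intro h2a
    exact hadm ⟨l + m, by
      constructor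
      · simp [map_add, LinearMap.add_apply, hll, hmm, hml]; omega
      · simp [map_add, LinearMap.add_apply, hlh, hmh]⟩
  have hmem : a = -1 ∨ a = 0 ∨ a = 1 := by omega
  constructor
  · simp only [Set.mem_insert_iff, Set.mem_singleton_iff]; omega
  · intro hnosep
    simp only [Set.mem_insert_iff, Set.mem_singleton_iff]
    rcases hmem with h5 | h5 | h5
    · exfalso
      apply hnosep
      refine ⟨m - l, ⟨?_, ?_⟩, ?_, ?_⟩
      · simp [map_sub, LinearMap.sub_apply, hll, hmm, hml]; omega
      · simp [map_sub, LinearMap.sub_apply, hlh, hmh]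
      · have : B (m - l) l = 1 := by
          simp [map_sub, LinearMap.sub_apply, hll, hml]; omega
        omega
      · have : B (m - l) m = -1 := by
          simp [map_sub, LinearMap.sub_apply, hmm]; omega
        omega
    · left; exact h5
    · right; exact h5

end K3
end

section
/- Let (S,h) be a 4-polarized lattice and let c₁,c₂,c₃ ∈ root₁(S,h) be a triangle. Then κ := c₁ + c₂ + c₃ satisfies ⟨κ,κ⟩ = 0 and κ ≠ 0, and the bilinear form is negative semidefinite on the ℚ-span (inside S ⊗ ℚ) of the pencil {c₁,c₂,c₃} ∪ {l ∈ root₁(S,h) : ⟨l,c₁⟩ = ⟨l,c₂⟩ = ⟨l,c₃⟩ = 0} (the pencil of a triangle is parabolic). -/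
namespace K3

/-- In a 4-polarized lattice, for a triangle `c₁,c₂,c₃` of lines,
`κ := c₁+c₂+c₃` is a nonzero isotropic vector, and the form is negative semidefinite on
the ℚ-span of the pencil of the triangle.  (Negative semidefiniteness on the ℚ-span of a
subset of `S` is equivalent to negative semidefiniteness on its ℤ-span.) -/
theorem triangle_pencil_parabolic
    {S : Type*} [AddCommGroup S] [Module ℤ S]
    (B : S →ₗ[ℤ] S →ₗ[ℤ] ℤ) (h : S)
    (hpol : IsPolarized B h)
    (c₁ c₂ c₃ : S) (htri : IsTriangle B (root1 B h) c₁ c₂ c₃) :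
    B (c₁ + c₂ + c₃) (c₁ + c₂ + c₃) = 0 ∧ c₁ + c₂ + c₃ ≠ 0 ∧
    ∀ v ∈ Submodule.span ℤ (pencil B (root1 B h) c₁ c₂ c₃), B v v ≤ 0 := by
  obtain ⟨h1, h2, h3, _, _, _, h12, h13, h23⟩ := htri
  obtain ⟨h1a, h1b⟩ := h1
  obtain ⟨h2a, h2b⟩ := h2
  obtain ⟨h3a, h3b⟩ := h3
  set κ := c₁ + c₂ + c₃ with hκ
  have hsym := hpol.symm
  have hκκ : B κ κ = 0 := by
    simp only [hκ, map_add, LinearMap.add_apply]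
    have := hsym c₂ c₁; have := hsym c₃ c₁; have := hsym c₃ c₂
    linarith
  have hκh : B κ h = 3 := by
    simp only [hκ, map_add, LinearMap.add_apply]; linarith
  have hκ0 : κ ≠ 0 := by
    intro h0
    rw [h0] at hκh; simp at hκh
  refine ⟨hκκ, hκ0, ?_⟩
  -- key lemma: B v κ = 0 → B v v ≤ 0
  have key : ∀ v : S, B v κ = 0 → B v v ≤ 0 := by
    intro v hvκ
    have hκv : B κ v = 0 := by rw [hsym]; exact hvκ
    set w := (3:ℤ) • v - (B v h) • κ with hw
    have expand : B w w =
        3*(3*B v v - B v h * B κ v) - B v h * (3 * B v κ - B v h * B κ κ) := by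
      simp [hw, map_sub, map_zsmul, smul_eq_mul]
      try ring
    have hww : B w w = 9 * B v v := by
      rw [expand, hvκ, hκv, hκκ]; ring
    by_cases hw0 : w = 0
    · have h3v : (3:ℤ) • v = (B v h) • κ := by
        exact sub_eq_zero.mp (hw ▸ hw0)
      have e : B ((3:ℤ) • v) ((3:ℤ) • v) = B ((B v h) • κ) ((B v h) • κ) := by
        rw [h3v]
      have e2 : (3:ℤ) * (3 * B v v) = B v h * (B v h * B κ κ) := by
        simpa [map_zsmul, smul_eq_mul] using e
      rw [hκκ] at e2
      linarith
    · have hwh : B w h = 0 := by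
        have : B w h = 3 * B v h - B v h * B κ h := by
          simp [hw, map_sub, map_zsmul, smul_eq_mul]
          try ring
        rw [this, hκh]; ring
      have := hpol.hyperbolic w hw0 hwh
      linarith [hww ▸ this]
  intro v hv
  apply key
  have s21 := hsym c₂ c₁
  have s31 := hsym c₃ c₁
  have s32 := hsym c₃ c₂
  have hker : Submodule.span ℤ (pencil B (root1 B h) c₁ c₂ c₃) ≤
      LinearMap.ker (B.flip κ) := by
    rw [Submodule.span_le]
    intro l hl
    simp only [SetLike.mem_coe, LinearMap.mem_ker, hκ, map_add, LinearMap.add_apply,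
      LinearMap.flip_apply]
    rcases hl with hl | ⟨hlΓ, hl1, hl2, hl3⟩
    · simp only [Set.mem_insert_iff, Set.mem_singleton_iff] at hl
      rcases hl with rfl | rfl | rfl <;> linarith
    · linarith
  exact (LinearMap.mem_ker.mp (hker hv) : B.flip κ v = 0)

end K3
end
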